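/- Let G be a finite simple graph with positive integer vertex weights w, let M̄ be a maximum antimatching of G with |M̄| ≥ 1, and let K = V(G) ∖ V(M̄). Let C ⊆ K be an equivalence class of the relation on K identifying vertices with the same neighborhood inside V(M̄), and suppose |C| > |M̄|. Let W ⊆ C with |W| = |M̄| be such that w(u) ≥ w(v) for every u ∈ W and every v ∈ C ∖ W. Then σ(G,w) = σ(G − (C ∖ W), w) + Σ_{v ∈ C∖W} w(v), where G − (C∖W) is the graph obtained from G by deleting all vertices of C ∖ W. -/

import Mathlib

open Finset

/-- A finset of vertices is independent (stable) in `G`. -/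
def IndepSet {V : Type*} (G : SimpleGraph V) (S : Finset V) : Prop :=
  ∀ u ∈ S, ∀ v ∈ S, ¬ G.Adj u v

/-- A proper coloring of the subgraph of `G` induced by `A`:
a partition of `A` into independent sets (the color classes). -/
def IsProperColoring {V : Type*} [DecidableEq V] (G : SimpleGraph V) {A : Finset V}
    (P : Finpartition A) : Prop :=
  ∀ S ∈ P.parts, IndepSet G S

/-- The weight of a coloring: the sum over color classes of the maximum weight in the class. -/
def colWeight {V : Type*} [DecidableEq V] {A : Finset V} (w : V → ℕ) (P : Finpartition A) : ℕ :=
  ∑ S ∈ P.parts, S.sup w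

/-- The weighted chromatic number of the subgraph of `G` induced by the vertex set `A`. -/
noncomputable def sigmaOn {V : Type*} [DecidableEq V] (G : SimpleGraph V) (w : V → ℕ)
    (A : Finset V) : ℕ :=
  sInf { n | ∃ P : Finpartition A, IsProperColoring G P ∧ n = colWeight w P }

/-- The weighted chromatic number `σ(G,w)`. -/
noncomputable def sigmaW {V : Type*} [Fintype V] [DecidableEq V] (G : SimpleGraph V)
    (w : V → ℕ) : ℕ :=
  sigmaOn G w Finset.univ

/-- An antimatching of `G`: a set of pairwise disjoint unordered pairs of distinct
non-adjacent vertices of `G` (equivalently, a matching of the complement of `G`). -/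
def IsAntimatching {V : Type*} (G : SimpleGraph V) (M : Finset (Sym2 V)) : Prop :=
  (∀ e ∈ M, e ∈ Gᶜ.edgeSet) ∧
  ∀ e ∈ M, ∀ f ∈ M, e ≠ f → ∀ x, x ∈ e → x ∉ f

/-- A maximum antimatching of `G`. -/
def IsMaxAntimatching {V : Type*} (G : SimpleGraph V) (M : Finset (Sym2 V)) : Prop :=
  IsAntimatching G M ∧ ∀ M' : Finset (Sym2 V), IsAntimatching G M' → M'.card ≤ M.card

/-- The set `V(M̄)` of vertices covered by the pairs of `M`. -/
def coveredVerts {V : Type*} [Fintype V] [DecidableEq V] (M : Finset (Sym2 V)) : Finset V :=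
  Finset.univ.filter fun v => ∃ e ∈ M, v ∈ e

/-- `G` is an interval graph: vertices can be assigned nonempty closed real intervals so that
two distinct vertices are adjacent iff their intervals intersect. -/
def IsIntervalGraph {V : Type*} (G : SimpleGraph V) : Prop :=
  ∃ f : V → ℝ × ℝ, (∀ v, (f v).1 ≤ (f v).2) ∧
    ∀ u v : V, G.Adj u v ↔
      u ≠ v ∧ (Set.Icc (f u).1 (f u).2 ∩ Set.Icc (f v).1 (f v).2).Nonempty


section Aux

variable {V : Type*} [DecidableEq V]

lemma indepSet_subset {G : SimpleGraph V} {S T : Finset V} (h : IndepSet G T) (hST : S ⊆ T) :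
    IndepSet G S := fun u hu v hv => h u (hST hu) v (hST hv)

lemma sigmaOn_le_colWeight (G : SimpleGraph V) (w : V → ℕ) {A : Finset V} (P : Finpartition A)
    (hP : IsProperColoring G P) : sigmaOn G w A ≤ colWeight w P :=
  Nat.sInf_le ⟨P, hP, rfl⟩

lemma exists_opt (G : SimpleGraph V) (w : V → ℕ) (A : Finset V) :
    ∃ P : Finpartition A, IsProperColoring G P ∧ sigmaOn G w A = colWeight w P := by
  classical
  have hsi : (A.image fun v => ({v} : Finset V)).SupIndep id := by
    rw [Finset.supIndep_iff_pairwiseDisjoint]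
    intro s hs t ht hst
    simp only [coe_image, Set.mem_image, mem_coe] at hs ht
    obtain ⟨a, _, rfl⟩ := hs
    obtain ⟨b, _, rfl⟩ := ht
    simp only [id, Function.onFun]
    exact Finset.disjoint_singleton.mpr (fun h => hst (by rw [h]))
  have hsup : (A.image fun v => ({v} : Finset V)).sup id = A := by
    rw [Finset.sup_image]
    simpa using A.sup_singleton'
  set P₀ := Finpartition.ofErase _ hsi hsup with hP₀
  have hproper : IsProperColoring G P₀ := by
    intro S hS
    have : S ∈ A.image fun v => ({v} : Finset V) := mem_of_mem_erase hS
    obtain ⟨a, _, rfl⟩ := mem_image.mp this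
    intro u hu v hv
    rw [mem_singleton] at hu hv
    subst hu; subst hv
    exact G.irrefl
  have hne : {n | ∃ P : Finpartition A, IsProperColoring G P ∧ n = colWeight w P}.Nonempty :=
    ⟨colWeight w P₀, P₀, hproper, rfl⟩
  exact Nat.sInf_mem hne

lemma sum_union_le' {α : Type*} [DecidableEq α] (s t : Finset α) (f : α → ℕ) :
    ∑ a ∈ s ∪ t, f a ≤ ∑ a ∈ s, f a + ∑ a ∈ t, f a := by
  rw [← Finset.union_sdiff_self_eq_union, Finset.sum_union Finset.disjoint_sdiff]
  exact Nat.add_le_add_left (Finset.sum_le_sum_of_subset (sdiff_subset)) _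

lemma sum_image_le' {α β : Type*} [DecidableEq β] (s : Finset α) (g : α → β) (f : β → ℕ) :
    ∑ b ∈ s.image g, f b ≤ ∑ a ∈ s, f (g a) := by
  classical
  induction s using Finset.induction with
  | empty => simp
  | @insert a s ha ih =>
    rw [image_insert, sum_insert ha]
    by_cases hg : g a ∈ s.image g
    · rw [insert_eq_self.mpr hg]
      omega
    · rw [sum_insert hg]
      omega

lemma maxIneq (a b m : ℕ) (h : b ≤ a) : (a ⊔ m) + b ≤ a + (b ⊔ m) := by
  rcases le_total m b with h1 | h1
  · rw [sup_eq_left.mpr (h1.trans h), sup_eq_left.mpr h1]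
  · rw [sup_eq_right.mpr h1]
    rcases le_total m a with h2 | h2
    · rw [sup_eq_left.mpr h2]; omega
    · rw [sup_eq_right.mpr h2]; omega

lemma sigmaOn_le_sdiff (G : SimpleGraph V) (w : V → ℕ) {A B : Finset V} (hBA : B ⊆ A) :
    sigmaOn G w A ≤ sigmaOn G w (A \ B) + ∑ v ∈ B, w v := by
  classical
  obtain ⟨P, hP, hPw⟩ := exists_opt G w (A \ B)
  set parts := P.parts ∪ B.image (fun v => ({v} : Finset V)) with hparts
  have hmem : ∀ s ∈ parts, s ∈ P.parts ∨ ∃ b ∈ B, s = {b} := by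
    intro s hs
    rcases mem_union.mp hs with h | h
    · exact Or.inl h
    · obtain ⟨b, hb, rfl⟩ := mem_image.mp h
      exact Or.inr ⟨b, hb, rfl⟩
  have hsi : parts.SupIndep id := by
    rw [Finset.supIndep_iff_pairwiseDisjoint]
    intro s hs t ht hst
    simp only [id, Function.onFun]
    have hs' := hmem s (mem_coe.mp hs)
    have ht' := hmem t (mem_coe.mp ht)
    rcases hs' with hs' | ⟨b, hb, rfl⟩ <;> rcases ht' with ht' | ⟨c, hc, rfl⟩
    · exact P.disjoint hs' ht' hst
    · rw [Finset.disjoint_singleton_right]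
      intro hcs
      exact (mem_sdiff.mp (P.le hs' hcs)).2 hc
    · rw [Finset.disjoint_singleton_left]
      intro hbs
      exact (mem_sdiff.mp (P.le ht' hbs)).2 hb
    · exact Finset.disjoint_singleton.mpr (fun h => hst (by rw [h]))
  have hsup : parts.sup id = A := by
    rw [hparts, Finset.sup_union, P.sup_parts, Finset.sup_image]
    have : (B.sup fun v => ({v} : Finset V)) = B := by simpa using B.sup_singleton'
    rw [show ((id : Finset V → Finset V) ∘ fun v => ({v} : Finset V)) = fun v => ({v} : Finset V)
      from rfl, this]
    exact sdiff_sup_cancel hBA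
  set Q := Finpartition.ofErase parts hsi hsup with hQ
  have hQproper : IsProperColoring G Q := by
    intro S hS
    rcases hmem S (mem_of_mem_erase hS) with h | ⟨b, _, rfl⟩
    · exact hP S h
    · intro u hu v hv
      rw [mem_singleton] at hu hv
      subst hu; subst hv
      exact G.irrefl
  have hQw : colWeight w Q ≤ colWeight w P + ∑ v ∈ B, w v := by
    have h1 : colWeight w Q ≤ ∑ S ∈ parts, S.sup w := by
      apply Finset.sum_le_sum_of_subset (Finset.erase_subset _ _)
    have h2 : ∑ S ∈ parts, S.sup w ≤
        ∑ S ∈ P.parts, S.sup w + ∑ S ∈ B.image (fun v => ({v} : Finset V)), S.sup w := by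
      rw [hparts]
      exact sum_union_le' _ _ _
    have h3 : ∑ S ∈ B.image (fun v => ({v} : Finset V)), S.sup w ≤ ∑ v ∈ B, w v := by
      calc ∑ S ∈ B.image (fun v => ({v} : Finset V)), S.sup w
          ≤ ∑ v ∈ B, ({v} : Finset V).sup w := sum_image_le' _ _ _
        _ = ∑ v ∈ B, w v := by simp
    calc colWeight w Q ≤ ∑ S ∈ parts, S.sup w := h1
      _ ≤ _ := h2
      _ ≤ colWeight w P + ∑ v ∈ B, w v := by
          unfold colWeight; omega
  calc sigmaOn G w A ≤ colWeight w Q := sigmaOn_le_colWeight G w Q hQproper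
    _ ≤ colWeight w P + ∑ v ∈ B, w v := hQw
    _ = sigmaOn G w (A \ B) + ∑ v ∈ B, w v := by rw [hPw]

end Aux

section Anti
variable {V : Type*} [Fintype V] [DecidableEq V] {G : SimpleGraph V} {M : Finset (Sym2 V)}

lemma mem_covered {v : V} : v ∈ coveredVerts M ↔ ∃ e ∈ M, v ∈ e := by
  simp [coveredVerts]

lemma K_clique (hM : IsMaxAntimatching G M) {a b : V}
    (ha : a ∉ coveredVerts M) (hb : b ∉ coveredVerts M) (hab : a ≠ b) : G.Adj a b := by
  by_contra hn
  have hanotin : ∀ e ∈ M, a ∉ e := by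
    intro e he hae
    exact ha (mem_covered.mpr ⟨e, he, hae⟩)
  have hbnotin : ∀ e ∈ M, b ∉ e := by
    intro e he hbe
    exact hb (mem_covered.mpr ⟨e, he, hbe⟩)
  have hnotmem : s(a, b) ∉ M := fun h => hanotin _ h (Sym2.mem_mk_left a b)
  have hM' : IsAntimatching G (insert s(a, b) M) := by
    constructor
    · intro e he
      rcases mem_insert.mp he with rfl | he
      · rw [SimpleGraph.mem_edgeSet, SimpleGraph.compl_adj]
        exact ⟨hab, hn⟩
      · exact hM.1.1 e he
    · intro e he f hf hef z hze hzf
      rcases mem_insert.mp he with rfl | he <;> rcases mem_insert.mp hf with rfl | hf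
      · exact hef rfl
      · rcases Sym2.mem_iff.mp hze with h | h
        · exact hanotin f hf (h ▸ hzf)
        · exact hbnotin f hf (h ▸ hzf)
      · rcases Sym2.mem_iff.mp hzf with h | h
        · exact hanotin e he (h ▸ hze)
        · exact hbnotin e he (h ▸ hze)
      · exact hM.1.2 e he f hf hef z hze hzf
  have := hM.2 _ hM'
  rw [Finset.card_insert_of_notMem hnotmem] at this
  omega

lemma no_two_nonneighbors (hM : IsMaxAntimatching G M) {u0 u1 : V}
    (hu0 : u0 ∉ coveredVerts M) (hu1 : u1 ∉ coveredVerts M) (hne : u1 ≠ u0)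
    (htwin : ∀ x ∈ coveredVerts M, G.Adj u1 x ↔ G.Adj u0 x)
    {e : Sym2 V} (he : e ∈ M) {x y : V} (hx : x ∈ e) (hy : y ∈ e) (hxy : x ≠ y)
    (hnx : ¬ G.Adj u0 x) (hny : ¬ G.Adj u0 y) : False := by
  have hxcov : x ∈ coveredVerts M := mem_covered.mpr ⟨e, he, hx⟩
  have hycov : y ∈ coveredVerts M := mem_covered.mpr ⟨e, he, hy⟩
  have hxu0 : x ≠ u0 := fun h => hu0 (h ▸ hxcov)
  have hxu1 : x ≠ u1 := fun h => hu1 (h ▸ hxcov)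
  have hyu0 : y ≠ u0 := fun h => hu0 (h ▸ hycov)
  have hyu1 : y ≠ u1 := fun h => hu1 (h ▸ hycov)
  have hu0notin : ∀ f ∈ M, u0 ∉ f := fun f hf h => hu0 (mem_covered.mpr ⟨f, hf, h⟩)
  have hu1notin : ∀ f ∈ M, u1 ∉ f := fun f hf h => hu1 (mem_covered.mpr ⟨f, hf, h⟩)
  have hxnotin : ∀ f ∈ M.erase e, x ∉ f := by
    intro f hf
    exact hM.1.2 e he f (mem_of_mem_erase hf) (Ne.symm (ne_of_mem_erase hf)) x hx
  have hynotin : ∀ f ∈ M.erase e, y ∉ f := by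
    intro f hf
    exact hM.1.2 e he f (mem_of_mem_erase hf) (Ne.symm (ne_of_mem_erase hf)) y hy
  set M' := insert s(x, u0) (insert s(y, u1) (M.erase e)) with hM'def
  have hM' : IsAntimatching G M' := by
    constructor
    · intro f hf
      rcases mem_insert.mp hf with rfl | hf
      · rw [SimpleGraph.mem_edgeSet, SimpleGraph.compl_adj]
        exact ⟨hxu0, fun h => hnx h.symm⟩
      rcases mem_insert.mp hf with rfl | hf
      · rw [SimpleGraph.mem_edgeSet, SimpleGraph.compl_adj]
        refine ⟨hyu1, fun h => ?_⟩
        exact ((htwin y hycov).mp h.symm) |> hny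
      · exact hM.1.1 f (mem_of_mem_erase hf)
    · intro a ha b hb hab z hza hzb
      rcases mem_insert.mp ha with rfl | ha
      · rcases mem_insert.mp hb with rfl | hb
        · exact hab rfl
        rcases mem_insert.mp hb with rfl | hb
        · rcases Sym2.mem_iff.mp hza with h1 | h1 <;>
            rcases Sym2.mem_iff.mp hzb with h2 | h2
          · exact hxy (h1.symm.trans h2)
          · exact hxu1 (h1.symm.trans h2)
          · exact hyu0 (h2.symm.trans h1)
          · exact hne (h2.symm.trans h1)
        · rcases Sym2.mem_iff.mp hza with h | h
          · exact hxnotin b hb (h ▸ hzb)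
          · exact hu0notin b (mem_of_mem_erase hb) (h ▸ hzb)
      rcases mem_insert.mp ha with rfl | ha
      · rcases mem_insert.mp hb with rfl | hb
        · rcases Sym2.mem_iff.mp hza with h1 | h1 <;>
            rcases Sym2.mem_iff.mp hzb with h2 | h2
          · exact hxy (h2.symm.trans h1)
          · exact hyu0 (h1.symm.trans h2)
          · exact hxu1 (h2.symm.trans h1)
          · exact hne (h1.symm.trans h2)
        rcases mem_insert.mp hb with rfl | hb
        · exact hab rfl
        · rcases Sym2.mem_iff.mp hza with h | h
          · exact hynotin b hb (h ▸ hzb)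
          · exact hu1notin b (mem_of_mem_erase hb) (h ▸ hzb)
      · rcases mem_insert.mp hb with rfl | hb
        · rcases Sym2.mem_iff.mp hzb with h | h
          · exact hxnotin a ha (h ▸ hza)
          · exact hu0notin a (mem_of_mem_erase ha) (h ▸ hza)
        rcases mem_insert.mp hb with rfl | hb
        · rcases Sym2.mem_iff.mp hzb with h | h
          · exact hynotin a ha (h ▸ hza)
          · exact hu1notin a (mem_of_mem_erase ha) (h ▸ hza)
        · exact hM.1.2 a (mem_of_mem_erase ha) b (mem_of_mem_erase hb) hab z hza hzb
  have hcard : M'.card = M.card + 1 := by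
    have h1 : s(y, u1) ∉ M.erase e := fun h => hu1notin _ (mem_of_mem_erase h) (Sym2.mem_mk_right y u1)
    have h2 : s(x, u0) ∉ insert s(y, u1) (M.erase e) := by
      intro h
      rcases mem_insert.mp h with h | h
      · have : u0 ∈ s(y, u1) := h ▸ Sym2.mem_mk_right x u0
        rcases Sym2.mem_iff.mp this with h' | h'
        · exact hyu0 h'.symm
        · exact hne h'.symm
      · exact hu0notin _ (mem_of_mem_erase h) (Sym2.mem_mk_right x u0) 
    have hMe : 1 ≤ M.card := Finset.card_pos.mpr ⟨e, he⟩
    rw [hM'def, Finset.card_insert_of_notMem h2, Finset.card_insert_of_notMem h1,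
      Finset.card_erase_of_mem he]
    omega
  have := hM.2 _ hM'
  omega

end Anti

lemma double_sum_trick {α : Type*} [DecidableEq α] (C : Finset α) (π : α → α)
    (hπinj : Function.Injective π) (himg : C.image π = C) (f g : α → ℕ)
    (h : ∀ c ∈ C, f c + f (π c) ≤ g c + g (π c)) : ∑ c ∈ C, f c ≤ ∑ c ∈ C, g c := by
  have hsum2 : ∑ c ∈ C, (f c + f (π c)) ≤ ∑ c ∈ C, (g c + g (π c)) := Finset.sum_le_sum h
  have hfπ : ∑ c ∈ C, f (π c) = ∑ c ∈ C, f c := by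
    have := Finset.sum_image (s := C) (g := π) (f := f) (fun x _ y _ hxy => hπinj hxy)
    rw [himg] at this
    exact this.symm
  have hgπ : ∑ c ∈ C, g (π c) = ∑ c ∈ C, g c := by
    have := Finset.sum_image (s := C) (g := π) (f := g) (fun x _ y _ hxy => hπinj hxy)
    rw [himg] at this
    exact this.symm
  rw [Finset.sum_add_distrib, Finset.sum_add_distrib, hfπ, hgπ] at hsum2
  omega

/-- safeness of Rule 2: deleting all but the `|M̄|` heaviest vertices of a large
equivalence class `C` of `K = V(G) ∖ V(M̄)` decreases `σ` by exactly the total deleted weight. -/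
theorem rule2_safe
    {V : Type*} [Fintype V] [DecidableEq V] (G : SimpleGraph V) (w : V → ℕ)
    (hw : ∀ v, 0 < w v)
    (M : Finset (Sym2 V)) (hM : IsMaxAntimatching G M) (hM1 : 1 ≤ M.card)
    (K : Finset V) (hK : K = Finset.univ \ coveredVerts M)
    (C : Finset V) (u0 : V) (hu0 : u0 ∈ K)
    (hC : ∀ v : V, v ∈ C ↔ v ∈ K ∧ ∀ x ∈ coveredVerts M, (G.Adj v x ↔ G.Adj u0 x))
    (hCbig : M.card < C.card)
    (W : Finset V) (hWC : W ⊆ C) (hWcard : W.card = M.card)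
    (hWheavy : ∀ u ∈ W, ∀ v ∈ C \ W, w v ≤ w u) :
    sigmaW G w = sigmaOn G w (Finset.univ \ (C \ W)) + ∑ v ∈ C \ W, w v := by
  classical
  set D := C \ W with hD
  have hDC : D ⊆ C := sdiff_subset
  have hDmem : ∀ v, v ∈ D ↔ v ∈ C ∧ v ∉ W := by
    intro v; rw [hD, mem_sdiff]
  have hcovK : ∀ v : V, v ∈ K ↔ v ∉ coveredVerts M := by
    intro v; rw [hK, mem_sdiff]; simp
  have hCK : C ⊆ K := fun v hv => ((hC v).mp hv).1
  have hu0C : u0 ∈ C := (hC u0).mpr ⟨hu0, fun x _ => Iff.rfl⟩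
  have hCcliq : ∀ a ∈ C, ∀ b ∈ C, a ≠ b → G.Adj a b := fun a ha b hb hab =>
    K_clique hM ((hcovK a).mp (hCK ha)) ((hcovK b).mp (hCK hb)) hab
  set X := (coveredVerts M).filter (fun x => ¬ G.Adj u0 x) with hXdef
  have hXmem : ∀ x, x ∈ X ↔ x ∈ coveredVerts M ∧ ¬ G.Adj u0 x := by
    intro x; rw [hXdef, mem_filter]
  have hXC : ∀ x ∈ X, x ∉ C := fun x hx hxC =>
    ((hcovK x).mp (hCK hxC)) ((hXmem x).mp hx).1
  have hXnon : ∀ c ∈ C, ∀ y : V, y ≠ c → ¬ G.Adj c y → y ∈ X := by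
    intro c hc y hy hnadj
    by_cases hyK : y ∈ K
    · exact absurd (K_clique hM ((hcovK c).mp (hCK hc)) ((hcovK y).mp hyK) hy.symm) hnadj
    · have hycov : y ∈ coveredVerts M := by
        by_contra h
        exact hyK ((hcovK y).mpr h)
      rw [hXmem]
      refine ⟨hycov, fun h => hnadj ?_⟩
      exact (((hC c).mp hc).2 y hycov).mpr h
  obtain ⟨u1, hu1C, hu1ne⟩ := Finset.exists_mem_ne (lt_of_le_of_lt hM1 hCbig) u0
  have hXcard : X.card ≤ M.card := by
    have hmapsto : ∀ x ∈ X,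
        (fun x => if h : ∃ e ∈ M, x ∈ e then h.choose else s(x, x)) x ∈ M := by
      intro x hx
      have hex : ∃ e ∈ M, x ∈ e := mem_covered.mp ((hXmem x).mp hx).1
      simp only [dif_pos hex]
      exact hex.choose_spec.1
    apply Finset.card_le_card_of_injOn _ hmapsto
    intro x hx y hy hfxy
    simp only [mem_coe] at hx hy
    by_contra hxy
    have hex : ∃ e ∈ M, x ∈ e := mem_covered.mp ((hXmem x).mp hx).1
    have hey : ∃ e ∈ M, y ∈ e := mem_covered.mp ((hXmem y).mp hy).1
    simp only [dif_pos hex, dif_pos hey] at hfxy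
    have hxe : x ∈ hex.choose := hex.choose_spec.2
    have hye : y ∈ hex.choose := by rw [hfxy]; exact hey.choose_spec.2
    exact no_two_nonneighbors hM ((hcovK u0).mp hu0) ((hcovK u1).mp (hCK hu1C)) hu1ne
      (fun z hz => ((hC u1).mp hu1C).2 z hz) hex.choose_spec.1 hxe hye hxy
      ((hXmem x).mp hx).2 ((hXmem y).mp hy).2
  have h1dir : sigmaOn G w Finset.univ ≤ sigmaOn G w (Finset.univ \ D) + ∑ v ∈ D, w v :=
    sigmaOn_le_sdiff G w (subset_univ D)
  -- second direction
  obtain ⟨P, hP, hPw⟩ := exists_opt G w (Finset.univ : Finset V)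
  set R : V → Finset V := fun c => (P.part c).erase c with hRdef
  have hpart : ∀ c : V, P.part c = insert c (R c) :=
    fun c => (Finset.insert_erase (P.mem_part (mem_univ c))).symm
  have hRX : ∀ c ∈ C, R c ⊆ X := by
    intro c hc y hy
    have hy' := Finset.mem_erase.mp hy
    have hnadj : ¬ G.Adj c y :=
      hP (P.part c) (P.part_mem.mpr (mem_univ c)) c (P.mem_part (mem_univ c)) y hy'.2
    exact hXnon c hc y hy'.1 hnadj
  have hpartinj : ∀ c ∈ C, ∀ c' ∈ C, P.part c = P.part c' → c = c' := by
    intro c hc c' hc' h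
    by_contra hne
    refine hP (P.part c) (P.part_mem.mpr (mem_univ c)) c (P.mem_part (mem_univ c)) c'
      ?_ (hCcliq c hc c' hc' hne)
    rw [h]
    exact P.mem_part (mem_univ c')
  set N' := C.filter (fun c => (R c).Nonempty) with hN'def
  have hN'C : N' ⊆ C := filter_subset _ _
  have hN'card : N'.card ≤ M.card := by
    have step : N'.card ≤ X.card := by
      apply Finset.card_le_card_of_injOn (fun c => if h : (R c).Nonempty then h.choose else c)
      · intro c hc
        have hc' := Finset.mem_filter.mp hc
        simp only [dif_pos hc'.2]
        exact hRX c hc'.1 hc'.2.choose_spec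
      · intro c hc c' hc' hf
        simp only [mem_coe] at hc hc'
        have h1 := Finset.mem_filter.mp hc
        have h2 := Finset.mem_filter.mp hc'
        simp only [dif_pos h1.2, dif_pos h2.2] at hf
        have hz1 : h1.2.choose ∈ P.part c := Finset.erase_subset _ _ h1.2.choose_spec
        have hz2 : h2.2.choose ∈ P.part c' := Finset.erase_subset _ _ h2.2.choose_spec
        apply hpartinj c h1.1 c' h2.1
        refine P.eq_of_mem_parts (P.part_mem.mpr (mem_univ c)) (P.part_mem.mpr (mem_univ c')) hz1 ?_
        rw [hf]
        exact hz2
    omega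
  set DN := N' \ W with hDNdef
  have hDND : DN ⊆ D := by
    intro v hv
    rw [hDNdef, mem_sdiff] at hv
    rw [hDmem]
    exact ⟨hN'C hv.1, hv.2⟩
  have hDNcard : DN.card ≤ (W \ N').card := by
    have h1 := Finset.card_sdiff_add_card_inter N' W
    have h2 := Finset.card_sdiff_add_card_inter W N'
    rw [Finset.inter_comm] at h2
    have h3 : DN.card = (N' \ W).card := by rw [hDNdef]
    have h4 := hN'card
    have h5 := hWcard
    omega
  obtain ⟨W', hW'sub, hW'card⟩ := Finset.exists_subset_card_eq hDNcard
  have hW'W : W' ⊆ W := hW'sub.trans sdiff_subset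
  have hW'C : W' ⊆ C := hW'W.trans hWC
  have hW'N' : ∀ u ∈ W', u ∉ N' := fun u hu => (mem_sdiff.mp (hW'sub hu)).2
  have hW'D : ∀ u ∈ W', u ∉ D := by
    intro u hu hud
    exact ((hDmem u).mp hud).2 (hW'W hu)
  have hdisj : Disjoint W' DN := by
    rw [Finset.disjoint_right]
    intro a ha
    rw [hDNdef, mem_sdiff] at ha
    exact fun h => ha.2 (hW'W h)
  set e := Finset.equivOfCardEq hW'card with hedef
  set π : V → V := fun v =>
    if h : v ∈ W' then (e ⟨v, h⟩ : V) else if h : v ∈ DN then (e.symm ⟨v, h⟩ : V) else v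
    with hπdef
  have hπW' : ∀ v, (h : v ∈ W') → π v = (e ⟨v, h⟩ : V) := by
    intro v h
    simp only [hπdef]
    rw [dif_pos h]
  have hπW'mem : ∀ v ∈ W', π v ∈ DN := by
    intro v h
    rw [hπW' v h]
    exact (e ⟨v, h⟩).2
  have hπDN : ∀ v, (h : v ∈ DN) → π v = (e.symm ⟨v, h⟩ : V) := by
    intro v h
    have hnw : v ∉ W' := fun h' => (Finset.disjoint_left.mp hdisj h') h
    simp only [hπdef]
    rw [dif_neg hnw, dif_pos h]
  have hπDNmem : ∀ v ∈ DN, π v ∈ W' := by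
    intro v h
    rw [hπDN v h]
    exact (e.symm ⟨v, h⟩).2
  have hπfix : ∀ v, v ∉ W' → v ∉ DN → π v = v := by
    intro v h1 h2
    simp only [hπdef]
    rw [dif_neg h1, dif_neg h2]
  have hππ : ∀ v, π (π v) = v := by
    intro v
    by_cases h : v ∈ W'
    · rw [hπW' v h, hπDN _ (e ⟨v, h⟩).2]
      rw [show (⟨((e ⟨v, h⟩ : {x // x ∈ DN}) : V), (e ⟨v, h⟩).2⟩ : {x // x ∈ DN}) = e ⟨v, h⟩
        from Subtype.ext rfl]
      rw [Equiv.symm_apply_apply]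
    · by_cases h2 : v ∈ DN
      · rw [hπDN v h2, hπW' _ (e.symm ⟨v, h2⟩).2]
        rw [show (⟨((e.symm ⟨v, h2⟩ : {x // x ∈ W'}) : V), (e.symm ⟨v, h2⟩).2⟩ : {x // x ∈ W'})
          = e.symm ⟨v, h2⟩ from Subtype.ext rfl]
        rw [Equiv.apply_symm_apply]
      · rw [hπfix v h h2, hπfix v h h2]
  have hπinj : Function.Injective π := Function.LeftInverse.injective hππ
  have hπCmem : ∀ v ∈ C, π v ∈ C := by
    intro v hv
    by_cases h1 : v ∈ W'
    · exact hDC (hDND (hπW'mem v h1))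
    · by_cases h2 : v ∈ DN
      · exact hW'C (hπDNmem v h2)
      · rw [hπfix v h1 h2]; exact hv
  have hπfixNotC : ∀ v, v ∉ C → π v = v := fun v hv =>
    hπfix v (fun h => hv (hW'C h)) (fun h => hv (hDC (hDND h)))
  have hCimg : C.image π = C := by
    apply Finset.eq_of_subset_of_card_le
    · intro x hx
      obtain ⟨a, ha, rfl⟩ := mem_image.mp hx
      exact hπCmem a ha
    · rw [Finset.card_image_of_injective _ hπinj]
  have htwin : ∀ a b : V, ¬ G.Adj a b → ¬ G.Adj (π a) (π b) := by
    intro a b hnadj hadj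
    by_cases hab : a = b
    · subst hab
      exact G.irrefl hadj
    by_cases haC : a ∈ C <;> by_cases hbC : b ∈ C
    · exact hnadj (hCcliq a haC b hbC hab)
    · rw [hπfixNotC b hbC] at hadj
      have hbX : b ∈ X := hXnon a haC b (fun h => hab h.symm) hnadj
      have hb' := (hXmem b).mp hbX
      exact hb'.2 ((((hC (π a)).mp (hπCmem a haC)).2 b hb'.1).mp hadj)
    · rw [hπfixNotC a haC] at hadj
      have haX : a ∈ X := hXnon b hbC a hab (fun h => hnadj h.symm)
      have ha' := (hXmem a).mp haX
      exact ha'.2 ((((hC (π b)).mp (hπCmem b hbC)).2 a ha'.1).mp hadj.symm)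
    · rw [hπfixNotC a haC, hπfixNotC b hbC] at hadj
      exact hnadj hadj
  set τ : Finset V → Finset V := fun S => (S.image π) \ D with hτdef
  have hsup' : (P.parts.image τ).sup id = Finset.univ \ D := by
    apply Finset.Subset.antisymm
    · show (P.parts.image τ).sup id ≤ Finset.univ \ D
      apply Finset.sup_le
      intro S hS
      obtain ⟨S₀, _, rfl⟩ := mem_image.mp hS
      intro x hx
      simp only [hτdef, id, mem_sdiff] at hx ⊢
      exact ⟨mem_univ x, hx.2⟩
    · intro x hx
      have hxD : x ∉ D := (mem_sdiff.mp hx).2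
      obtain ⟨S₀, hS₀, hmem⟩ := P.exists_mem (mem_univ (π x))
      rw [Finset.mem_sup]
      refine ⟨τ S₀, mem_image_of_mem τ hS₀, ?_⟩
      simp only [hτdef, id, mem_sdiff]
      exact ⟨mem_image.mpr ⟨π x, hmem, hππ x⟩, hxD⟩
  have hsi' : (P.parts.image τ).SupIndep id := by
    rw [Finset.supIndep_iff_pairwiseDisjoint]
    intro s hs t ht hst
    simp only [coe_image, Set.mem_image, mem_coe] at hs ht
    obtain ⟨S₁, hS₁, rfl⟩ := hs
    obtain ⟨S₂, hS₂, rfl⟩ := ht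
    have hne : S₁ ≠ S₂ := fun h => hst (by rw [h])
    have hd2 : Disjoint (S₁.image π) (S₂.image π) :=
      (Finset.disjoint_image hπinj).mpr (P.disjoint hS₁ hS₂ hne)
    simp only [id, Function.onFun, hτdef]
    exact Disjoint.mono sdiff_subset sdiff_subset hd2
  set Q := Finpartition.ofErase (P.parts.image τ) hsi' hsup' with hQdef
  have hQparts : Q.parts = (P.parts.image τ).erase ⊥ := rfl
  have hQproper : IsProperColoring G Q := by
    intro S hS
    rw [hQparts] at hS
    obtain ⟨S₀, hS₀, rfl⟩ := mem_image.mp (mem_of_mem_erase hS)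
    have hindep : IndepSet G (S₀.image π) := by
      intro u hu v hv
      obtain ⟨a, ha, rfl⟩ := mem_image.mp hu
      obtain ⟨b, hb, rfl⟩ := mem_image.mp hv
      exact htwin a b (hP S₀ hS₀ a ha b hb)
    exact indepSet_subset hindep sdiff_subset
  have hQw : colWeight w Q ≤ ∑ S ∈ P.parts, (τ S).sup w := by
    have h0 : colWeight w Q = ∑ S ∈ (P.parts.image τ).erase ⊥, S.sup w := by
      unfold colWeight
      rw [hQparts]
    rw [h0]
    calc ∑ S ∈ (P.parts.image τ).erase ⊥, S.sup w
        ≤ ∑ S ∈ P.parts.image τ, S.sup w :=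
          Finset.sum_le_sum_of_subset (Finset.erase_subset _ _)
      _ ≤ ∑ S ∈ P.parts, (τ S).sup w := sum_image_le' _ _ _
  -- the main combinatorial inequality
  have hmain : ∑ S ∈ P.parts, (τ S).sup w + ∑ v ∈ D, w v ≤ ∑ S ∈ P.parts, S.sup w := by
    have hfilter_eq : P.parts.filter (fun S => (S ∩ C).Nonempty)
        = C.image (fun c => P.part c) := by
      ext S
      constructor
      · intro hS
        have h1 := Finset.mem_filter.mp hS
        obtain ⟨c, hc⟩ := h1.2
        have hc' := Finset.mem_inter.mp hc
        exact mem_image.mpr ⟨c, hc'.2, P.part_eq_of_mem h1.1 hc'.1⟩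
      · intro hS
        obtain ⟨c, hcC, rfl⟩ := mem_image.mp hS
        exact Finset.mem_filter.mpr ⟨P.part_mem.mpr (mem_univ c),
          ⟨c, Finset.mem_inter.mpr ⟨P.mem_part (mem_univ c), hcC⟩⟩⟩
    have hτid : ∀ S ∈ P.parts, ¬ (S ∩ C).Nonempty → τ S = S := by
      intro S _ h
      have hSC : ∀ x ∈ S, x ∉ C := fun x hx hxC => h ⟨x, Finset.mem_inter.mpr ⟨hx, hxC⟩⟩
      have himg : S.image π = S := by
        rw [Finset.image_congr (g := id) (fun x hx => hπfixNotC x (hSC x hx))]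
        exact Finset.image_id
      simp only [hτdef]
      rw [himg]
      apply Finset.sdiff_eq_self_of_disjoint
      rw [Finset.disjoint_right]
      exact fun a haD haS => hSC a haS (hDC haD)
    rw [← Finset.sum_filter_add_sum_filter_not P.parts (fun S => (S ∩ C).Nonempty)
        (fun S => (τ S).sup w),
      ← Finset.sum_filter_add_sum_filter_not P.parts (fun S => (S ∩ C).Nonempty)
        (fun S => S.sup w)]
    have hsame : ∑ S ∈ P.parts.filter (fun S => ¬ (S ∩ C).Nonempty), (τ S).sup w
        = ∑ S ∈ P.parts.filter (fun S => ¬ (S ∩ C).Nonempty), S.sup w := by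
      apply Finset.sum_congr rfl
      intro S hS
      have h' := Finset.mem_filter.mp hS
      rw [hτid S h'.1 h'.2]
    have hDsum : ∑ c ∈ C, (if c ∈ D then w c else 0) = ∑ v ∈ D, w v := by
      rw [Finset.sum_ite_mem, Finset.inter_eq_right.mpr hDC]
    have hkey : ∑ S ∈ P.parts.filter (fun S => (S ∩ C).Nonempty), (τ S).sup w + ∑ v ∈ D, w v
        ≤ ∑ S ∈ P.parts.filter (fun S => (S ∩ C).Nonempty), S.sup w := by
      rw [hfilter_eq, Finset.sum_image hpartinj, Finset.sum_image hpartinj, ← hDsum,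
        ← Finset.sum_add_distrib]
      -- value computations
      have hval_part_eq : ∀ c ∈ C, c ∉ N' → P.part c = {c} := by
        intro c hc hcn
        have h' : ¬ (R c).Nonempty := fun h => hcn (Finset.mem_filter.mpr ⟨hc, h⟩)
        rw [Finset.not_nonempty_iff_eq_empty] at h'
        rw [hpart c, h']
        rfl
      have hRfix : ∀ c ∈ C, (R c).image π = R c := by
        intro c hc
        rw [Finset.image_congr (g := id) (fun x hx => hπfixNotC x (hXC x (hRX c hc hx)))]
        exact Finset.image_id
      have hτin : ∀ c ∈ C, π c ∉ D → τ (P.part c) = insert (π c) (R c) := by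
        intro c hc hπcD
        simp only [hτdef]
        rw [hpart c, Finset.image_insert, hRfix c hc]
        apply Finset.sdiff_eq_self_of_disjoint
        rw [Finset.disjoint_left]
        intro a ha haD
        rcases Finset.mem_insert.mp ha with h | h
        · exact hπcD (h ▸ haD)
        · exact hXC a (hRX c hc h) (hDC haD)
      have hval1f : ∀ u ∈ W', (τ (P.part u)).sup w + (if u ∈ D then w u else 0) = 0 := by
        intro u hu
        have huC : u ∈ C := hW'C hu
        have h1 : τ (P.part u) = ∅ := by
          rw [hval_part_eq u huC (hW'N' u hu)]
          simp only [hτdef, Finset.image_singleton]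
          rw [Finset.sdiff_eq_empty_iff_subset]
          exact Finset.singleton_subset_iff.mpr (hDND (hπW'mem u hu))
        rw [h1, if_neg (hW'D u hu)]
        simp
      have hval1g : ∀ u ∈ W', (P.part u).sup w = w u := by
        intro u hu
        rw [hval_part_eq u (hW'C hu) (hW'N' u hu)]
        exact Finset.sup_singleton
      have hval2f : ∀ d ∈ DN,
          (τ (P.part d)).sup w + (if d ∈ D then w d else 0)
            = (w (π d) ⊔ (R d).sup w) + w d := by
        intro d hd
        have hdC : d ∈ C := hDC (hDND hd)
        have h1 : τ (P.part d) = insert (π d) (R d) :=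
          hτin d hdC (hW'D _ (hπDNmem d hd))
        rw [h1, Finset.sup_insert, if_pos (hDND hd)]
      have hval2g : ∀ d : V, (P.part d).sup w = w d ⊔ (R d).sup w := by
        intro d
        rw [hpart d, Finset.sup_insert]
      have hval3 : ∀ c ∈ C, c ∉ W' → c ∉ DN →
          (τ (P.part c)).sup w + (if c ∈ D then w c else 0) ≤ (P.part c).sup w := by
        intro c hc h1 h2
        have hπc : π c = c := hπfix c h1 h2
        by_cases hcD : c ∈ D
        · have hcN : c ∉ N' := by
            intro hcN
            apply h2
            rw [hDNdef, mem_sdiff]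
            exact ⟨hcN, ((hDmem c).mp hcD).2⟩
          have hτc : τ (P.part c) = ∅ := by
            rw [hval_part_eq c hc hcN]
            simp only [hτdef, Finset.image_singleton, hπc]
            rw [Finset.sdiff_eq_empty_iff_subset]
            exact Finset.singleton_subset_iff.mpr hcD
          rw [hτc, if_pos hcD, hval_part_eq c hc hcN, Finset.sup_singleton]
          simp
        · have hτc : τ (P.part c) = P.part c := by
            rw [hτin c hc (by rw [hπc]; exact hcD), hπc, ← hpart c]
          rw [hτc, if_neg hcD]
          omega
      apply double_sum_trick C π hπinj hCimg
      intro c hc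
      by_cases h1 : c ∈ W'
      · have hd : π c ∈ DN := hπW'mem c h1
        rw [hval1f c h1, hval1g c h1, hval2f _ hd, hval2g (π c), hππ c]
        have hle : w (π c) ≤ w c := hWheavy c (hW'W h1) (π c) (hD ▸ hDND hd)
        have := maxIneq (w c) (w (π c)) ((R (π c)).sup w) hle
        omega
      · by_cases h2 : c ∈ DN
        · have hu : π c ∈ W' := hπDNmem c h2
          rw [hval2f c h2, hval2g c, hval1f _ hu, hval1g _ hu]
          have hle : w c ≤ w (π c) := hWheavy (π c) (hW'W hu) c (hD ▸ hDND h2)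
          have := maxIneq (w (π c)) (w c) ((R c).sup w) hle
          omega
        · rw [hπfix c h1 h2]
          have := hval3 c hc h1 h2
          omega
    rw [hsame]
    omega
  have h2dir : sigmaOn G w (Finset.univ \ D) + ∑ v ∈ D, w v ≤ sigmaOn G w Finset.univ := by
    have ha := sigmaOn_le_colWeight G w Q hQproper
    have hb := hQw
    have hc' : colWeight w P = ∑ S ∈ P.parts, S.sup w := rfl
    omega
  show sigmaOn G w Finset.univ = sigmaOn G w (Finset.univ \ D) + ∑ v ∈ D, w v
  omega
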